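/- Let (a,γ) be a minimal pair of definition for a residue transcendental extension (K(X)|K,v). Let E be the least positive integer with Eγ ∈ vK(a), write Q^E = Σ_{i=E}^{nE} c_i (X-a)^i with c_i ∈ K(a), where Q is the minimal polynomial of a over K. If v(c_i) + iγ = E·v(Q) for some index i, then E divides i. -/

import Mathlib

open IntermediateField Polynomial

namespace ValPaper

variable {Ω Γ : Type*} [Field Ω] [AddCommGroup Γ] [LinearOrder Γ] [IsOrderedAddMonoid Γ]

section Defs

variable (K : Type*) [Field K] [Algebra K Ω]

/-- The value group of an intermediate field `F` under the valuation `v`: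
the subgroup of `Γ` generated by (equal to) the set of values of nonzero elements of `F`. -/
noncomputable def valGroup (v : AddValuation Ω (WithTop Γ)) (F : IntermediateField K Ω) :
    AddSubgroup Γ :=
  AddSubgroup.closure {g : Γ | ∃ x ∈ F, x ≠ 0 ∧ v x = (g : WithTop Γ)}

/-- The ramification index `(vM : vF)`. -/
noncomputable def ramIndex (v : AddValuation Ω (WithTop Γ)) (F M : IntermediateField K Ω) : ℕ :=
  (valGroup K v F).relIndex (valGroup K v M)

/-- The valuation ring `O_F` of an intermediate field `F`. -/
noncomputable def integers (v : AddValuation Ω (WithTop Γ)) (F : IntermediateField K Ω) :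
    Subring Ω where
  carrier := {x | x ∈ F ∧ 0 ≤ v x}
  zero_mem' := ⟨zero_mem F, by simp⟩
  one_mem' := ⟨one_mem F, by simp⟩
  add_mem' := fun hx hy => ⟨add_mem hx.1 hy.1, le_trans (le_min hx.2 hy.2) (v.map_add _ _)⟩
  mul_mem' := fun hx hy => ⟨mul_mem hx.1 hy.1, by rw [v.map_mul]; exact add_nonneg hx.2 hy.2⟩
  neg_mem' := fun hx => ⟨neg_mem hx.1, by rw [v.map_neg]; exact hx.2⟩

/-- The maximal ideal of the valuation ring of `F`. -/
noncomputable def maxIdeal (v : AddValuation Ω (WithTop Γ)) (F : IntermediateField K Ω) :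
    Ideal (integers K v F) where
  carrier := {x | 0 < v (x : Ω)}
  zero_mem' := by
    show (0 : WithTop Γ) < v ((0 : integers K v F) : Ω)
    rw [show ((0 : integers K v F) : Ω) = 0 from rfl, v.map_zero]
    exact lt_of_le_of_ne le_top (by simp)
  add_mem' := fun {x y} hx hy => lt_of_lt_of_le (lt_min hx hy) (v.map_add _ _)
  smul_mem' := fun c {x} hx => by
    show (0 : WithTop Γ) < v ((c : Ω) * (x : Ω))
    rw [v.map_mul]
    exact lt_of_lt_of_le hx (le_add_of_nonneg_left c.2.2)

/-- The residue ring (in fact field) `Fv` of an intermediate field `F`. -/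
noncomputable abbrev Res (v : AddValuation Ω (WithTop Γ)) (F : IntermediateField K Ω) :=
  integers K v F ⧸ maxIdeal K v F

lemma integers_mono (v : AddValuation Ω (WithTop Γ)) {F M : IntermediateField K Ω} (h : F ≤ M) :
    integers K v F ≤ integers K v M := fun _ hx => ⟨h hx.1, hx.2⟩

/-- The canonical map between residue fields induced by an inclusion of intermediate fields. -/
noncomputable def resMap (v : AddValuation Ω (WithTop Γ)) {F M : IntermediateField K Ω}
    (h : F ≤ M) : Res K v F →+* Res K v M :=
  Ideal.quotientMap (maxIdeal K v M) (Subring.inclusion (integers_mono K v h))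
    (fun _ hx => hx)

set_option synthInstance.maxHeartbeats 1000000 in
open scoped Classical in
/-- The residue degree `[Mv : Fv]` (junk value `0` if `F ≰ M`). -/
noncomputable def resDeg (v : AddValuation Ω (WithTop Γ)) (F M : IntermediateField K Ω) : ℕ :=
  if h : F ≤ M then
    letI := (resMap K v h).toAlgebra
    Module.finrank (Res K v F) (Res K v M)
  else 0

/-- The defect `d(M|F,v)`, defined via the Lemma of Ostrowski as
`[M : F] / ((vM : vF) · [Mv : Fv])`. -/
noncomputable def defect (v : AddValuation Ω (WithTop Γ)) (F M : IntermediateField K Ω) : ℕ :=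
  relfinrank F M / (ramIndex K v F M * resDeg K v F M)

end Defs

section DefsBase

variable (F : Type*) [Field F] [Algebra F Ω]

open scoped Classical in
/-- `jnum v F a γ` is the number of `F`-conjugates `a'` of `a` (counted with multiplicity,
including `a` itself) such that `v (a - a') ≥ γ`. -/
noncomputable def jnum (v : AddValuation Ω (WithTop Γ)) (a : Ω) (γ : Γ) : ℕ :=
  Multiset.card (((minpoly F a).aroots Ω).filter fun r => (γ : WithTop Γ) ≤ v (a - r))

/-- `(a, γ)` is a minimal pair of definition for `v` over `F`:
(MP0) `a` is algebraic over `F` (i.e. `a ∈ F̄`),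
(MP1) `v (X - a) = γ = max v (X - F̄)`, and
(MP2) `v (a - b) ≥ γ` implies `[F(b) : F] ≥ [F(a) : F]` for all `b ∈ F̄`. -/
def IsMinimalPair (v : AddValuation Ω (WithTop Γ)) (X a : Ω) (γ : Γ) : Prop :=
  IsAlgebraic F a ∧ v (X - a) = (γ : WithTop Γ) ∧
    (∀ c : Ω, IsAlgebraic F c → v (X - c) ≤ (γ : WithTop Γ)) ∧
    ∀ b : Ω, IsAlgebraic F b → (γ : WithTop Γ) ≤ v (a - b) →
      Module.finrank F ↥(IntermediateField.adjoin F {a}) ≤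
        Module.finrank F ↥(IntermediateField.adjoin F {b})

/-- The decomposition group of `(F, v)` in `Ω`: all `F`-automorphisms compatible with `v`. -/
def decompGroup (v : AddValuation Ω (WithTop Γ)) : Subgroup (Ω ≃ₐ[F] Ω) where
  carrier := {σ | ∀ x : Ω, v (σ x) = v x}
  one_mem' := fun _ => rfl
  mul_mem' := fun {σ τ} hσ hτ x => by
    rw [AlgEquiv.mul_apply, hσ, hτ]
  inv_mem' := fun {σ} hσ x => by
    have h := hσ (σ⁻¹ x)
    rw [show σ (σ⁻¹ x) = x from AlgEquiv.apply_symm_apply σ x] at h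
    exact h.symm

/-- The henselization (= absolute decomposition field) of `(F, v)` inside `Ω`:
the elements of the separable closure of `F` fixed by the decomposition group. -/
noncomputable def henselAux (v : AddValuation Ω (WithTop Γ)) : IntermediateField F Ω :=
  separableClosure F Ω ⊓ IntermediateField.fixedField (decompGroup F v)

/-- The ramification group of `(F, v)` in `Ω`. -/
noncomputable def ramGroup (v : AddValuation Ω (WithTop Γ)) : Subgroup (Ω ≃ₐ[F] Ω) :=
  Subgroup.closure {σ | ∀ x ∈ separableClosure F Ω, x ≠ 0 → v x < v (σ x - x)}

/-- The absolute ramification field `F^r` of `(F, v)` inside `Ω`. -/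
noncomputable def ramField (v : AddValuation Ω (WithTop Γ)) : IntermediateField F Ω :=
  separableClosure F Ω ⊓ IntermediateField.fixedField (ramGroup F v)

end DefsBase

section DefsK

variable (K : Type*) [Field K] [Algebra K Ω]

/-- The henselization of an intermediate field `F`, viewed inside `IntermediateField K Ω`. -/
noncomputable def hensel (v : AddValuation Ω (WithTop Γ)) (F : IntermediateField K Ω) :
    IntermediateField K Ω :=
  (henselAux (↥F) v).restrictScalars K

/-- The relative algebraic closure `K̄` of `K` in `Ω` (as an intermediate field; when `Ω` is
algebraically closed this is an algebraic closure of `K`). -/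
noncomputable def algCl : IntermediateField K Ω :=
  IntermediateField.adjoin K {x : Ω | IsAlgebraic K x}

/-- The implicit constant field `IC (K(X)|K, v) := K̄ ∩ K(X)^h`. -/
noncomputable def ICfield (v : AddValuation Ω (WithTop Γ)) (X : Ω) : IntermediateField K Ω :=
  algCl K ⊓ hensel K v (IntermediateField.adjoin K {X})

/-- `(K(X)|K, v)` is value transcendental: `vK(X)/vK` has a nontorsion element,
i.e. `rat rk vK(X)/vK = 1`. -/
def ValueTrans (v : AddValuation Ω (WithTop Γ)) (X : Ω) : Prop :=
  ∃ g : Γ, g ∈ valGroup K v (IntermediateField.adjoin K {X}) ∧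
    ∀ n : ℕ, 0 < n → n • g ∉ valGroup K v (⊥ : IntermediateField K Ω)

/-- `(K(X)|K, v)` is residue transcendental: the residue field of `K(X)` contains an element
transcendental over the residue field of `K`, i.e. `trdeg (K(X)v | Kv) = 1`. -/
def ResidueTrans (v : AddValuation Ω (WithTop Γ)) (X : Ω) : Prop :=
  letI := (resMap K v (bot_le : (⊥ : IntermediateField K Ω) ≤
    IntermediateField.adjoin K {X})).toAlgebra
  ∃ ξ : Res K v (IntermediateField.adjoin K {X}),
    Transcendental (Res K v (⊥ : IntermediateField K Ω)) ξ

/-- `(K(X)|K, v)` is valuation transcendental: equality holds in the Abhyankar inequality,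
i.e. the extension is value transcendental or residue transcendental. -/
def ValuationTrans (v : AddValuation Ω (WithTop Γ)) (X : Ω) : Prop :=
  ValueTrans K v X ∨ ResidueTrans K v X

/-- `(K, v)` is a defectless field: every finite extension `M` of the henselization `K^h`
(inside `K̄ ⊆ Ω`) satisfies `[M : K^h] = (vM : vK^h)[Mv : K^h v]`. -/
def DefectlessField (v : AddValuation Ω (WithTop Γ)) : Prop :=
  ∀ M : IntermediateField K Ω, hensel K v ⊥ ≤ M → (∀ x ∈ M, IsAlgebraic K x) →
    relfinrank (hensel K v ⊥) M ≠ 0 →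
    relfinrank (hensel K v ⊥) M = ramIndex K v (hensel K v ⊥) M * resDeg K v (hensel K v ⊥) M

end DefsK

/-- The maximal ideal of the valuation ring is indeed maximal. -/
lemma maxIdeal_isMaximal (K : Type*) [Field K] [Algebra K Ω] (v : AddValuation Ω (WithTop Γ))
    (F : IntermediateField K Ω) : (maxIdeal K v F).IsMaximal := by
  rw [Ideal.isMaximal_iff]
  constructor
  · show ¬ (0 : WithTop Γ) < v ((1 : Ω))
    rw [v.map_one]
    exact lt_irrefl _
  · intro J x hIJ hxI hxJ
    have hx0 : 0 ≤ v (x : Ω) := x.2.2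
    have hxv : v (x : Ω) = 0 := le_antisymm (not_lt.mp hxI) hx0
    have hxne : (x : Ω) ≠ 0 := by
      intro h
      rw [h, v.map_zero] at hxv
      simp at hxv
    have hinv : v ((x : Ω)⁻¹) = 0 := by
      rw [v.map_inv, hxv]; simp
    have hmem : (x : Ω)⁻¹ ∈ integers K v F :=
      ⟨inv_mem (x.2.1 : (x : Ω) ∈ F), le_of_eq hinv.symm⟩
    have : (⟨(x : Ω)⁻¹, hmem⟩ * x : integers K v F) = 1 := by
      ext
      exact inv_mul_cancel₀ hxne
    have h1 : (⟨(x : Ω)⁻¹, hmem⟩ * x : integers K v F) ∈ J := J.mul_mem_left _ hxJ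
    rwa [this] at h1

/-- The residue ring of an intermediate field is a field. -/
noncomputable def resField (K : Type*) [Field K] [Algebra K Ω] (v : AddValuation Ω (WithTop Γ))
    (F : IntermediateField K Ω) : Field (Res K v F) :=
  letI := maxIdeal_isMaximal K v F
  Ideal.Quotient.field _


section Stmt5Aux

variable {Ω Γ : Type*} [Field Ω] [AddCommGroup Γ] [LinearOrder Γ] [IsOrderedAddMonoid Γ]

lemma vmap_msum_le (v : AddValuation Ω (WithTop Γ)) (s : Multiset Ω) (g : WithTop Γ)
    (h : ∀ x ∈ s, g ≤ v x) : g ≤ v s.sum := by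
  induction s using Multiset.induction with
  | empty => simp [v.map_zero]
  | cons a t ih =>
      rw [Multiset.sum_cons]
      exact v.map_le_add (h a (Multiset.mem_cons_self a t))
        (ih fun x hx => h x (Multiset.mem_cons_of_mem hx))

lemma vmap_msum_lt (v : AddValuation Ω (WithTop Γ)) (s : Multiset Ω) (g : WithTop Γ)
    (hg : g ≠ ⊤) (h : ∀ x ∈ s, g < v x) : g < v s.sum := by
  induction s using Multiset.induction with
  | empty => simpa [v.map_zero] using lt_top_iff_ne_top.2 hg
  | cons a t ih =>
      rw [Multiset.sum_cons]
      exact v.map_lt_add (h a (Multiset.mem_cons_self a t))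
        (ih fun x hx => h x (Multiset.mem_cons_of_mem hx))

lemma vmap_prod (v : AddValuation Ω (WithTop Γ)) (s : Multiset Ω) :
    v s.prod = (s.map v).sum := by
  induction s using Multiset.induction with
  | empty => simpa using v.map_one
  | cons a t ih => rw [Multiset.prod_cons, v.map_mul, Multiset.map_cons, Multiset.sum_cons, ih]

lemma msum_ne_top (s : Multiset (WithTop Γ)) (h : ∀ x ∈ s, x ≠ ⊤) : s.sum ≠ ⊤ := by
  induction s using Multiset.induction with
  | empty => simp
  | cons a t ih =>
      rw [Multiset.sum_cons]
      exact WithTop.add_ne_top.2 ⟨h a (Multiset.mem_cons_self a t),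
        ih fun x hx => h x (Multiset.mem_cons_of_mem hx)⟩

lemma smul_le_msum (s : Multiset (WithTop Γ)) (c : Γ) (h : ∀ x ∈ s, (c : WithTop Γ) ≤ x) :
    ((Multiset.card s • c : Γ) : WithTop Γ) ≤ s.sum := by
  induction s using Multiset.induction with
  | empty => simp
  | cons a t ih =>
      rw [Multiset.sum_cons, Multiset.card_cons, succ_nsmul, WithTop.coe_add, add_comm]
      exact add_le_add (h a (Multiset.mem_cons_self a t))
        (ih fun x hx => h x (Multiset.mem_cons_of_mem hx))

lemma msum_lt_smul (s : Multiset (WithTop Γ)) (c : Γ) (h0 : s ≠ 0)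
    (h : ∀ x ∈ s, x < (c : WithTop Γ)) : s.sum < ((Multiset.card s • c : Γ) : WithTop Γ) := by
  induction s using Multiset.induction with
  | empty => exact absurd rfl h0
  | cons a t ih =>
      rw [Multiset.sum_cons, Multiset.card_cons, succ_nsmul, WithTop.coe_add]
      rcases eq_or_ne t 0 with rfl | ht
      · simpa using h a (Multiset.mem_cons_self a 0)
      · have ha : a < (c : WithTop Γ) := h a (Multiset.mem_cons_self a t)
        have h1 : a + t.sum < a + ((Multiset.card t • c : Γ) : WithTop Γ) :=
          WithTop.add_lt_add_left (ne_top_of_lt ha)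
            (ih ht fun x hx => h x (Multiset.mem_cons_of_mem hx))
        have h2 : a + ((Multiset.card t • c : Γ) : WithTop Γ) <
            ((Multiset.card t • c : Γ) : WithTop Γ) + (c : WithTop Γ) := by
          rw [add_comm]
          exact WithTop.add_lt_add_left WithTop.coe_ne_top ha
        exact h1.trans h2

lemma coe_lt_add_coe_iff (x : WithTop Γ) (s t : Γ) :
    (s : WithTop Γ) < x + (t : WithTop Γ) ↔ ((s - t : Γ) : WithTop Γ) < x := by
  cases x with
  | top =>
      simp only [top_add]
      exact ⟨fun _ => WithTop.coe_lt_top _, fun _ => WithTop.coe_lt_top _⟩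
  | coe x =>
      rw [← WithTop.coe_add, WithTop.coe_lt_coe, WithTop.coe_lt_coe, sub_lt_iff_lt_add]

end Stmt5Aux


lemma mem_valGroup_of {Ω Γ : Type*} [Field Ω] [AddCommGroup Γ] [LinearOrder Γ] [IsOrderedAddMonoid Γ]
    {K : Type*} [Field K] [Algebra K Ω] (v : AddValuation Ω (WithTop Γ))
    (F : IntermediateField K Ω) {x : Ω} {g : Γ} (hxF : x ∈ F) (hx : x ≠ 0)
    (hv : v x = (g : WithTop Γ)) : g ∈ valGroup K v F :=
  AddSubgroup.subset_closure ⟨x, hxF, hx, hv⟩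

lemma dvd_of_zsmul_mem {Ω Γ : Type*} [Field Ω] [AddCommGroup Γ] [LinearOrder Γ] [IsOrderedAddMonoid Γ]
    {K : Type*} [Field K] [Algebra K Ω] (v : AddValuation Ω (WithTop Γ))
    (F : IntermediateField K Ω) (γ : Γ) (E : ℕ) (hE0 : 0 < E)
    (hEmem : E • γ ∈ valGroup K v F)
    (hEmin : ∀ E' : ℕ, 0 < E' → E' • γ ∈ valGroup K v F → E ≤ E') :
    ∀ m : ℤ, m • γ ∈ valGroup K v F → (E : ℤ) ∣ m := by
  intro m hm
  have hEz : (0 : ℤ) < (E : ℤ) := by exact_mod_cast hE0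
  have hr0 : 0 ≤ m % (E : ℤ) := Int.emod_nonneg m (by omega)
  have hrE : m % (E : ℤ) < (E : ℤ) := Int.emod_lt_of_pos m hEz
  have hmem : (m % (E : ℤ)) • γ ∈ valGroup K v F := by
    have hrdef : m % (E : ℤ) = m - (m / (E : ℤ)) * (E : ℤ) := by
      rw [Int.emod_def]; ring
    rw [hrdef, sub_smul, mul_smul]
    refine AddSubgroup.sub_mem _ hm (AddSubgroup.zsmul_mem _ ?_ _)
    rwa [natCast_zsmul]
  rcases eq_or_lt_of_le hr0 with h0 | hpos
  · exact Int.dvd_of_emod_eq_zero h0.symm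
  · exfalso
    have h1 : (m % (E : ℤ)).toNat • γ ∈ valGroup K v F := by
      rwa [← natCast_zsmul, Int.toNat_of_nonneg hr0]
    have h2 := hEmin (m % (E : ℤ)).toNat (by omega) h1
    omega

/-- With `E` least positive such that `Eγ ∈ vK(a)` and
`Q^E = Σ c_i (X-a)^i` over `K(a)`: if `v c_i + iγ = E·vQ` then `E ∣ i`. -/
theorem stmt_5 {K Ω Γ : Type*} [Field K] [Field Ω] [Algebra K Ω] [IsAlgClosed Ω]
    [AddCommGroup Γ] [LinearOrder Γ] [IsOrderedAddMonoid Γ]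
    (v : AddValuation Ω (WithTop Γ)) (X : Ω) (hX : Transcendental K X)
    [Algebra.IsAlgebraic ↥(IntermediateField.adjoin K {X}) Ω]
    (hrt : ResidueTrans K v X) (a : Ω) (γ : Γ) (hmp : IsMinimalPair K v X a γ)
    (E : ℕ) (hE0 : 0 < E) (hEmem : E • γ ∈ valGroup K v (IntermediateField.adjoin K {a}))
    (hEmin : ∀ E' : ℕ, 0 < E' → E' • γ ∈ valGroup K v (IntermediateField.adjoin K {a}) → E ≤ E') :
    ∀ i : ℕ,
      v (((Polynomial.taylor
            (⟨a, IntermediateField.mem_adjoin_simple_self K a⟩ :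
              ↥(IntermediateField.adjoin K {a}))
            (((minpoly K a).map
              (algebraMap K ↥(IntermediateField.adjoin K {a}))) ^ E)).coeff i : Ω)) +
          ((i • γ : Γ) : WithTop Γ) = E • v (Polynomial.aeval X (minpoly K a)) →
        E ∣ i := by
  classical
  intro i hi
  set A := IntermediateField.adjoin K {a} with hA
  set aA : ↥A := ⟨a, IntermediateField.mem_adjoin_simple_self K a⟩ with haA
  set Q : K[X] := minpoly K a with hQdef
  set QA : Polynomial ↥A := Q.map (algebraMap K ↥A) with hQA
  set QΩ : Polynomial Ω := Q.map (algebraMap K Ω) with hQΩ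
  have hint : IsIntegral K a := hmp.1.isIntegral
  have hQm : Q.Monic := minpoly.monic hint
  have hQΩm : QΩ.Monic := hQm.map _
  set B : Multiset Ω := QΩ.roots with hB
  set M : Multiset Ω := E • (B.map fun r => a - r) with hM
  set Ml := M.filter (fun β => v β < (γ : WithTop Γ)) with hMl
  set Mh := M.filter (fun β => ¬ v β < (γ : WithTop Γ)) with hMh
  set i0 := Multiset.card Mh with hi0
  set l := Multiset.card Ml with hl
  have hMsplit : Ml + Mh = M := Multiset.filter_add_not _ M
  have hMl_lt : ∀ β ∈ Ml, v β < (γ : WithTop Γ) := by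
    intro β hβ
    rw [hMl] at hβ
    exact (Multiset.mem_filter.1 hβ).2
  have hMh_le : ∀ β ∈ Mh, (γ : WithTop Γ) ≤ v β := by
    intro β hβ
    rw [hMh] at hβ
    exact not_lt.1 (Multiset.mem_filter.1 hβ).2
  -- the bridge between coefficients over K(a) and over Ω
  have hbridge : ∀ j : ℕ, (((taylor aA (QA ^ E)).coeff j : ↥A) : Ω)
      = (taylor a (QΩ ^ E)).coeff j := by
    intro j
    have hmapQ : (QA ^ E).map (algebraMap (↥A) Ω) = QΩ ^ E := by
      rw [Polynomial.map_pow, hQA, Polynomial.map_map, ← IsScalarTower.algebraMap_eq]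
    have htm : ((taylor aA (QA ^ E)).map (algebraMap (↥A) Ω))
        = taylor ((algebraMap (↥A) Ω) aA) ((QA ^ E).map (algebraMap (↥A) Ω)) := by
      rw [taylor_apply, taylor_apply, Polynomial.map_comp]
      simp only [Polynomial.map_add, Polynomial.map_X, Polynomial.map_C]
    have haAΩ : (algebraMap (↥A) Ω) aA = a := rfl
    calc (((taylor aA (QA ^ E)).coeff j : ↥A) : Ω)
        = ((taylor aA (QA ^ E)).map (algebraMap (↥A) Ω)).coeff j := by
          rw [Polynomial.coeff_map]; rfl
      _ = (taylor a (QΩ ^ E)).coeff j := by rw [htm, hmapQ, haAΩ]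
  -- splitting of Q over Ω
  have hsplitQ : QΩ = (B.map fun r => Polynomial.X - C r).prod :=
    (IsAlgClosed.splits QΩ).eq_prod_roots_of_monic hQΩm
  have htaylorQ : taylor a QΩ = ((B.map fun r => a - r).map fun β => Polynomial.X + C β).prod := by
    conv_lhs => rw [hsplitQ]
    rw [show (taylor a ((B.map fun r => Polynomial.X - C r).prod) : Polynomial Ω)
        = (taylorAlgHom a) ((B.map fun r => Polynomial.X - C r).prod) from rfl,
      map_multiset_prod, Multiset.map_map, Multiset.map_map]
    refine congrArg _ (Multiset.map_congr rfl fun r hr => ?_)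
    show taylor a (Polynomial.X - C r) = Polynomial.X + C (a - r)
    rw [taylor_apply]
    simp only [sub_comp, X_comp, C_comp, C_sub]
    ring
  have htaylorE : taylor a (QΩ ^ E) = (M.map fun β => Polynomial.X + C β).prod := by
    rw [show taylor a (QΩ ^ E) = (taylorAlgHom a) (QΩ ^ E) from rfl, map_pow,
      show ((taylorAlgHom a) QΩ : Polynomial Ω) = taylor a QΩ from rfl, htaylorQ, hM,
      Multiset.map_nsmul, Multiset.prod_nsmul]
  -- roots are algebraic
  have hQne : Q ≠ 0 := hQm.ne_zero
  have halg : ∀ r ∈ B, IsAlgebraic K r := by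
    intro r hr
    refine ⟨Q, hQne, ?_⟩
    have h1 : Polynomial.IsRoot QΩ r := Polynomial.isRoot_of_mem_roots hr
    rwa [Polynomial.aeval_def, ← Polynomial.eval_map]
  -- value of X - r for roots r
  have hvXsub : ∀ r ∈ B, v (X - r) = min (γ : WithTop Γ) (v (a - r)) := by
    intro r hr
    have h1 : v (X - a) = (γ : WithTop Γ) := hmp.2.1
    have h2 : v (X - r) ≤ (γ : WithTop Γ) := hmp.2.2.1 r (halg r hr)
    have hXr : X - r = (X - a) + (a - r) := by ring
    rcases lt_or_ge (v (a - r)) (γ : WithTop Γ) with h | h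
    · rw [min_eq_right h.le, hXr, v.map_add_eq_of_lt_right (by rw [h1]; exact h)]
    · rw [min_eq_left h]
      refine le_antisymm h2 ?_
      rw [hXr]
      exact v.map_le_add (le_of_eq h1.symm) h
  have hvQX : v (Polynomial.aeval X Q)
      = (B.map fun r => min (γ : WithTop Γ) (v (a - r))).sum := by
    have heval : Polynomial.aeval X Q = (B.map fun r => X - r).prod := by
      rw [Polynomial.aeval_def, ← Polynomial.eval_map, ← hQΩ]
      conv_lhs => rw [hsplitQ]
      rw [Polynomial.eval_multiset_prod, Multiset.map_map]
      refine congrArg _ (Multiset.map_congr rfl fun r hr => ?_)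
      simp
    rw [heval, vmap_prod, Multiset.map_map]
    exact congrArg _ (Multiset.map_congr rfl fun r hr => hvXsub r hr)
  have hEvQ : E • v (Polynomial.aeval X Q)
      = (M.map fun β => min (γ : WithTop Γ) (v β)).sum := by
    rw [hvQX, hM, Multiset.map_nsmul, Multiset.sum_nsmul, Multiset.map_map]
    rfl
  have hsum_split : (M.map fun β => min (γ : WithTop Γ) (v β)).sum
      = (Ml.map v).sum + ((i0 • γ : Γ) : WithTop Γ) := by
    rw [← hMsplit, Multiset.map_add, Multiset.sum_add]
    congr 1
    · refine congrArg _ (Multiset.map_congr rfl fun β hβ => ?_)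
      exact min_eq_right (le_of_lt (hMl_lt β hβ))
    · have hrep : Mh.map (fun β => min (γ : WithTop Γ) (v β))
          = Multiset.replicate i0 (γ : WithTop Γ) := by
        rw [Multiset.eq_replicate]
        refine ⟨by simp [hi0], fun b hb => ?_⟩
        obtain ⟨β, hβ, rfl⟩ := Multiset.mem_map.1 hb
        exact min_eq_left (hMh_le β hβ)
      rw [hrep, Multiset.sum_replicate, ← WithTop.coe_nsmul]
  set S := (Ml.map v).sum with hS
  have hS_ne : S ≠ ⊤ := by
    refine msum_ne_top _ fun x hx => ?_
    obtain ⟨β, hβ, rfl⟩ := Multiset.mem_map.1 hx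
    exact ne_top_of_lt (hMl_lt β hβ)
  obtain ⟨S0, hS0⟩ := WithTop.ne_top_iff_exists.1 hS_ne
  have hEdvd : E ∣ i0 := by
    rw [hi0, hMh, hM, Multiset.filter_nsmul, Multiset.card_nsmul]
    exact dvd_mul_right _ _
  set Pl := (Ml.map fun β => Polynomial.X + C β).prod with hPl
  set Ph := (Mh.map fun β => Polynomial.X + C β).prod with hPh
  have hPP : taylor a (QΩ ^ E) = Pl * Ph := by
    rw [htaylorE, ← hMsplit, Multiset.map_add, Multiset.prod_add]
  have hPhm : Ph.Monic := monic_multiset_prod_of_monic _ _ fun β hβ => monic_X_add_C β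
  have hdegmap : ∀ (t : Multiset Ω), ((t.map fun β => Polynomial.X + C β).prod).natDegree
      = Multiset.card t := by
    intro t
    rw [natDegree_multiset_prod_of_monic _ (fun f hf => by
      obtain ⟨β, hβ, rfl⟩ := Multiset.mem_map.1 hf; exact monic_X_add_C β)]
    rw [Multiset.map_map]
    have : (t.map fun β => ((fun β => Polynomial.X + C β) β).natDegree) = Multiset.replicate
        (Multiset.card t) 1 := by
      rw [Multiset.eq_replicate]
      exact ⟨by simp, fun b hb => by
        obtain ⟨β, hβ, rfl⟩ := Multiset.mem_map.1 hb; exact natDegree_X_add_C β⟩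
    rw [show (Multiset.map (natDegree ∘ fun β => Polynomial.X + C β) t)
        = (t.map fun β => ((fun β => Polynomial.X + C β) β).natDegree) from rfl, this,
      Multiset.sum_replicate, smul_eq_mul, mul_one]
  have hPhdeg : Ph.natDegree = i0 := by rw [hPh, hdegmap]
  have hPldeg : Pl.natDegree = l := by rw [hPl, hdegmap]
  have hPhlead : Ph.coeff i0 = 1 := by rw [← hPhdeg]; exact hPhm.coeff_natDegree
  have hPl0 : Pl.coeff 0 = Ml.prod := by
    rw [hPl, Polynomial.coeff_zero_eq_eval_zero, Polynomial.eval_multiset_prod,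
      Multiset.map_map]
    refine Eq.trans (congrArg Multiset.prod
      (Multiset.map_congr rfl (fun β (hβ : β ∈ Ml) => ?_)))
      (congrArg Multiset.prod (Multiset.map_id Ml))
    simp
  have hterm : ∀ j1 j2 : ℕ, j1 + j2 = i0 → j1 ≠ 0 →
      S < v (Pl.coeff j1 * Ph.coeff j2) := by
    intro j1 j2 hj12 hj1ne
    by_cases hj1l : j1 ≤ l
    · have hc1 : Pl.coeff j1 = Ml.esymm (Multiset.card Ml - j1) := by
        rw [hPl, Multiset.prod_X_add_C_coeff Ml (by omega)]
      have hc2 : Ph.coeff j2 = Mh.esymm j1 := by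
        rw [hPh, Multiset.prod_X_add_C_coeff Mh (by omega),
          show Multiset.card Mh - j2 = j1 by omega]
      rw [hc1, hc2, v.map_mul]
      have he2 : ((j1 • γ : Γ) : WithTop Γ) ≤ v (Mh.esymm j1) := by
        rw [Multiset.esymm]
        refine vmap_msum_le v _ _ ?_
        intro x hx
        obtain ⟨P, hP, rfl⟩ := Multiset.mem_map.1 hx
        obtain ⟨hPle, hPcard⟩ := Multiset.mem_powersetCard.1 hP
        rw [vmap_prod]
        have h3 := smul_le_msum (P.map v) γ (fun x hx => by
          obtain ⟨β, hβ, rfl⟩ := Multiset.mem_map.1 hx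
          exact hMh_le β (Multiset.mem_of_le hPle hβ))
        rwa [Multiset.card_map, hPcard] at h3
      have he1 : ((S0 - j1 • γ : Γ) : WithTop Γ) < v (Ml.esymm (Multiset.card Ml - j1)) := by
        rw [Multiset.esymm]
        refine vmap_msum_lt v _ _ WithTop.coe_ne_top ?_
        intro x hx
        obtain ⟨P, hP, rfl⟩ := Multiset.mem_map.1 hx
        obtain ⟨hPle, hPcard⟩ := Multiset.mem_powersetCard.1 hP
        rw [vmap_prod, ← coe_lt_add_coe_iff ((P.map v).sum) S0 (j1 • γ)]
        have hsplitP : (Ml - P) + P = Ml := tsub_add_cancel_of_le hPle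
        have hSsum : S = ((Ml - P).map v).sum + (P.map v).sum := by
          rw [hS, ← Multiset.sum_add, ← Multiset.map_add, hsplitP]
        have hcard : Multiset.card (Ml - P) = j1 := by
          rw [Multiset.card_sub hPle, hPcard]; omega
        have hlt : ((Ml - P).map v).sum < ((j1 • γ : Γ) : WithTop Γ) := by
          have h4 := msum_lt_smul ((Ml - P).map v) γ
            (by
              intro h
              apply hj1ne
              have := congrArg Multiset.card h
              rwa [Multiset.card_map, hcard, Multiset.card_zero] at this)
            (fun x hx => by
              obtain ⟨β, hβ, rfl⟩ := Multiset.mem_map.1 hx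
              exact hMl_lt β (Multiset.mem_of_le tsub_le_self hβ))
          rwa [Multiset.card_map, hcard] at h4
        have hfin : (P.map v).sum ≠ ⊤ := msum_ne_top _ (fun x hx => by
          obtain ⟨β, hβ, rfl⟩ := Multiset.mem_map.1 hx
          exact ne_top_of_lt (hMl_lt β (Multiset.mem_of_le hPle hβ)))
        calc (S0 : WithTop Γ) = S := hS0
          _ = ((Ml - P).map v).sum + (P.map v).sum := hSsum
          _ < ((j1 • γ : Γ) : WithTop Γ) + (P.map v).sum :=
              WithTop.add_lt_add_right hfin hlt
          _ = (P.map v).sum + ((j1 • γ : Γ) : WithTop Γ) := add_comm _ _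
      calc S = (S0 : WithTop Γ) := hS0.symm
        _ < v (Ml.esymm (Multiset.card Ml - j1)) + ((j1 • γ : Γ) : WithTop Γ) :=
            (coe_lt_add_coe_iff _ S0 (j1 • γ)).2 he1
        _ ≤ v (Ml.esymm (Multiset.card Ml - j1)) + v (Mh.esymm j1) :=
            add_le_add_right he2 _
    · have hz : Pl.coeff j1 = 0 :=
        Polynomial.coeff_eq_zero_of_natDegree_lt (by rw [hPldeg]; omega)
      rw [hz, zero_mul, v.map_zero]
      exact lt_top_iff_ne_top.2 hS_ne
  have hvc_i0 : v ((((taylor aA (QA ^ E)).coeff i0 : ↥A) : Ω)) = S := by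
    rw [hbridge i0, hPP, Polynomial.coeff_mul]
    have hmem : ((0 : ℕ), i0) ∈ Finset.HasAntidiagonal.antidiagonal i0 := by
      rw [Finset.HasAntidiagonal.mem_antidiagonal]
      omega
    rw [← Finset.add_sum_erase _ _ hmem]
    have hvmain : v (Pl.coeff 0 * Ph.coeff i0) = S := by
      rw [hPl0, hPhlead, mul_one, vmap_prod]
    have hrest : S < v (∑ x ∈ (Finset.HasAntidiagonal.antidiagonal i0).erase ((0 : ℕ), i0),
        Pl.coeff x.1 * Ph.coeff x.2) := by
      refine v.map_lt_sum hS_ne ?_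
      intro x hx
      have hx1 := Finset.mem_erase.1 hx
      have hadd : x.1 + x.2 = i0 := Finset.HasAntidiagonal.mem_antidiagonal.1 hx1.2
      have hne : x.1 ≠ 0 := by
        intro h0
        exact hx1.1 (Prod.ext h0 (by omega))
      exact hterm x.1 x.2 hadd hne
    rw [v.map_add_eq_of_lt_left (by rw [hvmain]; exact hrest), hvmain]
  have hkey : v ((((taylor aA (QA ^ E)).coeff i0 : ↥A) : Ω)) + ((i0 • γ : Γ) : WithTop Γ)
      = E • v (Polynomial.aeval X Q) := by
    rw [hvc_i0, hEvQ, hsum_split]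
  have heq : v ((((taylor aA (QA ^ E)).coeff i : ↥A) : Ω)) + ((i • γ : Γ) : WithTop Γ)
      = v ((((taylor aA (QA ^ E)).coeff i0 : ↥A) : Ω)) + ((i0 • γ : Γ) : WithTop Γ) :=
    hi.trans hkey.symm
  have hv0ne : v ((((taylor aA (QA ^ E)).coeff i0 : ↥A) : Ω)) ≠ ⊤ := by
    rw [hvc_i0]; exact hS_ne
  have hvine : v ((((taylor aA (QA ^ E)).coeff i : ↥A) : Ω)) ≠ ⊤ := by
    intro h
    rw [h, top_add] at heq
    exact (WithTop.add_ne_top.2 ⟨hv0ne, WithTop.coe_ne_top⟩) heq.symm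
  obtain ⟨gi, hgi⟩ := WithTop.ne_top_iff_exists.1 hvine
  obtain ⟨g0, hg0⟩ := WithTop.ne_top_iff_exists.1 hv0ne
  have hcine : ((((taylor aA (QA ^ E)).coeff i : ↥A) : Ω)) ≠ 0 := v.ne_top_iff.1 hvine
  have hc0ne : ((((taylor aA (QA ^ E)).coeff i0 : ↥A) : Ω)) ≠ 0 := v.ne_top_iff.1 hv0ne
  have hgiG : gi ∈ valGroup K v A :=
    mem_valGroup_of v A ((taylor aA (QA ^ E)).coeff i).2 hcine hgi.symm
  have hg0G : g0 ∈ valGroup K v A :=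
    mem_valGroup_of v A ((taylor aA (QA ^ E)).coeff i0).2 hc0ne hg0.symm
  have hGam : gi + i • γ = g0 + i0 • γ := by
    have hcoe : ((gi + i • γ : Γ) : WithTop Γ) = ((g0 + i0 • γ : Γ) : WithTop Γ) := by
      rw [WithTop.coe_add, WithTop.coe_add, hgi, hg0]; exact heq
    exact_mod_cast hcoe
  have hzsmul : ((i : ℤ) - (i0 : ℤ)) • γ ∈ valGroup K v A := by
    have h1 : ((i : ℤ) - (i0 : ℤ)) • γ = g0 - gi := by
      rw [sub_smul, natCast_zsmul, natCast_zsmul, sub_eq_sub_iff_add_eq_add, add_comm]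
      exact hGam
    rw [h1]
    exact AddSubgroup.sub_mem _ hg0G hgiG
  have hdvd1 : (E : ℤ) ∣ ((i : ℤ) - (i0 : ℤ)) :=
    dvd_of_zsmul_mem v A γ E hE0 hEmem hEmin _ hzsmul
  have hdvd2 : (E : ℤ) ∣ (i0 : ℤ) := Int.natCast_dvd_natCast.2 hEdvd
  have hdvd3 : (E : ℤ) ∣ (i : ℤ) := by
    have h5 : (E : ℤ) ∣ ((i : ℤ) - (i0 : ℤ)) + (i0 : ℤ) := dvd_add hdvd1 hdvd2
    rwa [sub_add_cancel] at h5
  exact Int.natCast_dvd_natCast.1 hdvd3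


end ValPaper
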